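/- Let x, y ∈ ℝ with 0 < y ≤ x ≤ 1 and y < 1. Then the function q ↦ x^q (1 - y + q(1-x)(x-y)) is nonincreasing on [0,∞). -/

import Mathlib

theorem stmt_9 (x y : ℝ) (hy0 : 0 < y) (hyx : y ≤ x) (hx1 : x ≤ 1) (hy1 : y < 1) :
    AntitoneOn (fun q : ℝ => x ^ q * (1 - y + q * (1 - x) * (x - y))) (Set.Ici 0) := by
  have hx0 : 0 < x := lt_of_lt_of_le hy0 hyx
  apply antitoneOn_of_deriv_nonpos (convex_Ici 0)
  · exact ((continuous_const.rpow continuous_id fun _ => Or.inl hx0.ne').mul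
      (by continuity)).continuousOn
  · intro q hq
    rw [interior_Ici] at hq
    have h1 : HasDerivAt (fun q : ℝ => x ^ q) (x ^ q * Real.log x) q := by
      have := (hasDerivAt_const q x).rpow (hasDerivAt_id q) hx0
      simpa using this
    have h2 : HasDerivAt (fun q : ℝ => 1 - y + q * (1 - x) * (x - y))
        ((1 - x) * (x - y)) q := by
      have := ((hasDerivAt_id q).mul_const ((1 - x) * (x - y))).const_add (1 - y)
      simpa [mul_assoc] using this
    exact (h1.mul h2).differentiableAt.differentiableWithinAt
  · intro q hq
    rw [interior_Ici] at hq
    have h1 : HasDerivAt (fun q : ℝ => x ^ q) (x ^ q * Real.log x) q := by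
      have := (hasDerivAt_const q x).rpow (hasDerivAt_id q) hx0
      simpa using this
    have h2 : HasDerivAt (fun q : ℝ => 1 - y + q * (1 - x) * (x - y))
        ((1 - x) * (x - y)) q := by
      have := ((hasDerivAt_id q).mul_const ((1 - x) * (x - y))).const_add (1 - y)
      simpa [mul_assoc] using this
    have hd : HasDerivAt (fun q : ℝ => x ^ q * (1 - y + q * (1 - x) * (x - y)))
        (x ^ q * Real.log x * (1 - y + q * (1 - x) * (x - y)) + x ^ q * ((1 - x) * (x - y))) q :=
      h1.mul h2
    rw [hd.deriv]
    have hL : Real.log x ≤ x - 1 := Real.log_le_sub_one_of_pos hx0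
    have hL0 : Real.log x ≤ 0 := Real.log_nonpos hx0.le hx1
    have hpow : (0:ℝ) < x ^ q := Real.rpow_pos_of_pos hx0 q
    have hq0 : 0 < q := hq
    have hkey : Real.log x * (1 - y + q * (1 - x) * (x - y)) + (1 - x) * (x - y) ≤ 0 := by
      nlinarith [mul_nonneg (mul_nonneg hq0.le (sub_nonneg.2 hx1)) (sub_nonneg.2 hyx),
        mul_nonneg (sub_nonneg.2 hx1) (sub_nonneg.2 hyx),
        mul_nonneg (mul_nonneg hq0.le (sub_nonneg.2 hx1)) (sub_nonneg.2 hy1.le),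
        sq_nonneg (1 - x)]
    calc x ^ q * Real.log x * (1 - y + q * (1 - x) * (x - y)) + x ^ q * ((1 - x) * (x - y))
        = x ^ q * (Real.log x * (1 - y + q * (1 - x) * (x - y)) + (1 - x) * (x - y)) := by ring
      _ ≤ 0 := mul_nonpos_of_nonneg_of_nonpos hpow.le hkey
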